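/- For all positive integers x, k, m, Σ_{d | m} μ(d) · C_k(⌊x/d⌋, m) = (k−1)^{ω(m)} · E_k(x, m), where the sum runs over all positive divisors d of m and μ is the Möbius function. -/

import Mathlib

/-- `C k x m = Σ_{n ≤ x} ⌊x/n⌋ (k−1)^{ω(mn)}`. -/
def C (k x m : ℕ) : ℕ :=
  ∑ n ∈ Finset.Icc 1 x, (x / n) * (k - 1) ^ (m * n).primeFactors.card

/-- `E k x m = Σ_{n ≤ x, gcd(m,n)=1} ⌊x/n⌋ (k−1)^{ω(n)}`. -/
def E (k x m : ℕ) : ℕ :=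
  ∑ n ∈ (Finset.Icc 1 x).filter (fun n => Nat.gcd m n = 1),
    (x / n) * (k - 1) ^ n.primeFactors.card

open Finset ArithmeticFunction

lemma sum_moebius_divisors (n : ℕ) :
    ∑ d ∈ n.divisors, (moebius d : ℤ) = if n = 1 then 1 else 0 := by
  rw [← coe_mul_zeta_apply, moebius_mul_coe_zeta, one_apply]

lemma primeFactors_div_sdiff {m j d : ℕ} (hm : 0 < m) (hj : 0 < j)
    (hdm : d ∣ m) (hdj : d ∣ j) :
    (j / d).primeFactors \ m.primeFactors = j.primeFactors \ m.primeFactors := by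
  have hd : 0 < d := Nat.pos_of_dvd_of_pos hdj hj
  have hjd : 0 < j / d := Nat.div_pos (Nat.le_of_dvd hj hdj) hd
  ext p
  simp only [Finset.mem_sdiff, Nat.mem_primeFactors]
  constructor
  · rintro ⟨⟨hp, hdvd, _⟩, hpm⟩
    exact ⟨⟨hp, hdvd.trans (Nat.div_dvd_of_dvd hdj), hj.ne'⟩, hpm⟩
  · rintro ⟨⟨hp, hdvd, _⟩, hpm⟩
    refine ⟨⟨hp, ?_, hjd.ne'⟩, hpm⟩
    have hpd : ¬ p ∣ d := by
      intro h
      exact hpm ⟨hp, h.trans hdm, hm.ne'⟩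
    have hcop : Nat.Coprime p d := (Nat.Prime.coprime_iff_not_dvd hp).mpr hpd
    exact hcop.dvd_of_dvd_mul_right (by rwa [Nat.div_mul_cancel hdj])

lemma card_primeFactors_mul_div {m j d : ℕ} (hm : 0 < m) (hj : 0 < j)
    (hdm : d ∣ m) (hdj : d ∣ j) :
    (m * (j / d)).primeFactors.card
      = m.primeFactors.card + (j.primeFactors \ m.primeFactors).card := by
  have hd : 0 < d := Nat.pos_of_dvd_of_pos hdj hj
  have hjd : 0 < j / d := Nat.div_pos (Nat.le_of_dvd hj hdj) hd
  rw [Nat.primeFactors_mul hm.ne' hjd.ne', ← Finset.union_sdiff_self_eq_union,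
    Finset.card_union_of_disjoint Finset.disjoint_sdiff,
    primeFactors_div_sdiff hm hj hdm hdj]

open ArithmeticFunction in
/-- For all positive integers `x`, `k`, `m`,
`Σ_{d ∣ m} μ(d) · C_k(⌊x/d⌋, m) = (k−1)^{ω(m)} · E_k(x, m)`, the sum running
over all positive divisors of `m`, where `μ` is the Möbius function. -/
theorem sum_moebius_C_eq_pow_omega_mul_E (x k m : ℕ) (hx : 0 < x) (hk : 0 < k)
    (hm : 0 < m) :
    ∑ d ∈ m.divisors, (moebius d : ℤ) * C k (x / d) m
      = ((k : ℤ) - 1) ^ m.primeFactors.card * E k x m := by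
  have hreindex : ∀ d ∈ m.divisors,
      (moebius d : ℤ) * C k (x / d) m
        = ∑ j ∈ Finset.Icc 1 x, if d ∣ j then
            (moebius d : ℤ) *
              ((x / j) * (k - 1) ^ (m * (j / d)).primeFactors.card : ℕ) else 0 := by
    intro d hd
    obtain ⟨hdm, -⟩ := Nat.mem_divisors.mp hd
    have hd0 : 0 < d := Nat.pos_of_dvd_of_pos hdm hm
    rw [C, ← Finset.sum_filter, Nat.cast_sum, Finset.mul_sum]
    refine Finset.sum_nbij' (fun n => d * n) (fun j => j / d) ?_ ?_ ?_ ?_ ?_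
    · intro n hn
      rw [Finset.mem_Icc] at hn
      rw [Finset.mem_filter, Finset.mem_Icc]
      refine ⟨⟨Nat.one_le_iff_ne_zero.mpr (Nat.mul_pos hd0 hn.1).ne', ?_⟩, dvd_mul_right d n⟩
      calc d * n = n * d := mul_comm d n
        _ ≤ x := (Nat.le_div_iff_mul_le hd0).mp hn.2
    · intro j hj
      rw [Finset.mem_filter, Finset.mem_Icc] at hj
      obtain ⟨⟨hj1, hj2⟩, hdj⟩ := hj
      rw [Finset.mem_Icc]
      exact ⟨Nat.div_pos (Nat.le_of_dvd hj1 hdj) hd0, Nat.div_le_div_right hj2⟩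
    · intro n _
      exact Nat.mul_div_cancel_left n hd0
    · intro j hj
      rw [Finset.mem_filter] at hj
      exact Nat.mul_div_cancel' hj.2
    · intro n _
      rw [Nat.div_div_eq_div_mul, Nat.mul_div_cancel_left n hd0]
  rw [Finset.sum_congr rfl hreindex, Finset.sum_comm]
  have hinner : ∀ j ∈ Finset.Icc 1 x,
      (∑ d ∈ m.divisors, if d ∣ j then
          (moebius d : ℤ) *
            ((x / j) * (k - 1) ^ (m * (j / d)).primeFactors.card : ℕ) else 0)
        = (if Nat.gcd m j = 1 then 1 else 0) *
            ((x / j) * (k - 1) ^ (m.primeFactors.card +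
              (j.primeFactors \ m.primeFactors).card) : ℕ) := by
    intro j hj
    have hj1 : 0 < j := (Finset.mem_Icc.mp hj).1
    rw [← Finset.sum_filter]
    have hset : m.divisors.filter (fun d => d ∣ j) = (Nat.gcd m j).divisors := by
      ext d
      simp only [Finset.mem_filter, Nat.mem_divisors, Nat.dvd_gcd_iff]
      constructor
      · rintro ⟨⟨h1, h2⟩, h3⟩
        refine ⟨⟨h1, h3⟩, fun h => ?_⟩
        rw [Nat.gcd_eq_zero_iff] at h
        exact hm.ne' h.1
      · rintro ⟨⟨h1, h2⟩, -⟩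
        exact ⟨⟨h1, hm.ne'⟩, h2⟩
    have hval : ∀ d ∈ m.divisors.filter (fun d => d ∣ j),
        (moebius d : ℤ) *
            ((x / j) * (k - 1) ^ (m * (j / d)).primeFactors.card : ℕ)
          = (moebius d : ℤ) *
            ((x / j) * (k - 1) ^ (m.primeFactors.card +
              (j.primeFactors \ m.primeFactors).card) : ℕ) := by
      intro d hd
      rw [Finset.mem_filter, Nat.mem_divisors] at hd
      rw [card_primeFactors_mul_div hm hj1 hd.1.1 hd.2]
    rw [Finset.sum_congr rfl hval, ← Finset.sum_mul, hset, sum_moebius_divisors]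
  rw [Finset.sum_congr rfl hinner]
  simp only [ite_mul, one_mul, zero_mul, ← Finset.sum_filter]
  rw [show ((k : ℤ) - 1) = ((k - 1 : ℕ) : ℤ) by omega, E]
  push_cast
  rw [Finset.mul_sum]
  refine Finset.sum_congr rfl fun j hj => ?_
  rw [Finset.mem_filter] at hj
  have hdisj : Disjoint m.primeFactors j.primeFactors :=
    Nat.Coprime.disjoint_primeFactors hj.2
  rw [Finset.sdiff_eq_self_of_disjoint hdisj.symm, pow_add]
  ring
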